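/- Let f : I → ℝ⁺ be a continuous nonnegative operator convex function on an interval I ⊆ ℝ. Then for any bounded selfadjoint operators A and B on a complex Hilbert space H with spectra contained in I and any a, b ∈ (0,1) with a < b, the following operator norm inequalities hold: ‖(1/2)∫₀ᵃ f((1−s)A + sB) ds + (1/2)∫₀ᵇ f((1−s)A + sB) ds − (1/(b−a))∫ₐᵇ (∫₀ᵗ f((1−s)A + sB) ds) dt‖ ≤ ((b−a)/8)·‖f((1−a)A + aB) + f((1−b)A + bB)‖ ≤ ((b−a)/8)·[‖f((1−a)A + aB)‖ + ‖f((1−b)A + bB)‖]. -/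

import Mathlib

open intervalIntegral MeasureTheory Set Filter

section Helpers

variable {A : Type*} [CStarAlgebra A] [PartialOrder A] [StarOrderedRing A]

private lemma DA_smul_le_smul {c : ℝ} {x y : A} (hc : 0 ≤ c) (hxy : x ≤ y) :
    c • x ≤ c • y := by
  rw [← sub_nonneg, ← smul_sub]
  exact smul_nonneg hc (sub_nonneg.2 hxy)

private lemma DA_smul_nonneg {c : ℝ} {x : A} (hc : 0 ≤ c) (hx : 0 ≤ x) : 0 ≤ c • x :=
  smul_nonneg hc hx

/-- If `-C ≤ X ≤ C` with `0 ≤ C` and `X` selfadjoint, then `‖X‖ ≤ ‖C‖`. -/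
private lemma DA_norm_le {X C : A} (hX : IsSelfAdjoint X) (hC : 0 ≤ C)
    (h1 : -C ≤ X) (h2 : X ≤ C) : ‖X‖ ≤ ‖C‖ := by
  obtain h | h := subsingleton_or_nontrivial A
  · simp [Subsingleton.elim X (0 : A)]
  · have hCsa : IsSelfAdjoint C := .of_nonneg hC
    have hup : X ≤ algebraMap ℝ A ‖C‖ := h2.trans hCsa.le_algebraMap_norm_self
    have hlo : algebraMap ℝ A (-‖C‖) ≤ X := by
      rw [map_neg]
      exact (neg_le_neg hCsa.le_algebraMap_norm_self).trans h1
    have hs1 : ∀ x ∈ spectrum ℝ X, x ≤ ‖C‖ :=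
      (le_algebraMap_iff_spectrum_le (a := X) hX).mp hup
    have hs2 : ∀ x ∈ spectrum ℝ X, -‖C‖ ≤ x :=
      (algebraMap_le_iff_le_spectrum (a := X) hX).mp hlo
    rcases CStarAlgebra.norm_or_neg_norm_mem_spectrum hX with h' | h'
    · exact hs1 _ h'
    · have := hs2 _ h'
      linarith

private lemma DA_selfadjoint_combo {a b : A} (ha : IsSelfAdjoint a) (hb : IsSelfAdjoint b)
    (s : ℝ) : IsSelfAdjoint ((1 - s) • a + s • b) :=
  (IsSelfAdjoint.smul (star_trivial (1 - s)) ha).add (IsSelfAdjoint.smul (star_trivial s) hb)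

private lemma DA_spec_combo {α β : ℝ} {a b : A} (ha : IsSelfAdjoint a) (hb : IsSelfAdjoint b)
    (hA : spectrum ℝ a ⊆ Icc α β) (hB : spectrum ℝ b ⊆ Icc α β) {s : ℝ}
    (hs0 : 0 ≤ s) (hs1 : s ≤ 1) : spectrum ℝ ((1 - s) • a + s • b) ⊆ Icc α β := by
  have hsa : IsSelfAdjoint ((1 - s) • a + s • b) := DA_selfadjoint_combo ha hb s
  have haα : algebraMap ℝ A α ≤ a :=
    (algebraMap_le_iff_le_spectrum (a := a) ha).mpr fun x hx => (hA hx).1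
  have hbα : algebraMap ℝ A α ≤ b :=
    (algebraMap_le_iff_le_spectrum (a := b) hb).mpr fun x hx => (hB hx).1
  have haβ : a ≤ algebraMap ℝ A β :=
    (le_algebraMap_iff_spectrum_le (a := a) ha).mpr fun x hx => (hA hx).2
  have hbβ : b ≤ algebraMap ℝ A β :=
    (le_algebraMap_iff_spectrum_le (a := b) hb).mpr fun x hx => (hB hx).2
  have hid : ∀ r : ℝ, (1 - s) • (algebraMap ℝ A r) + s • (algebraMap ℝ A r) = algebraMap ℝ A r := by
    intro r
    rw [← add_smul, sub_add_cancel, one_smul]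
  have h1 : algebraMap ℝ A α ≤ (1 - s) • a + s • b := by
    calc algebraMap ℝ A α = (1 - s) • (algebraMap ℝ A α) + s • (algebraMap ℝ A α) := (hid α).symm
      _ ≤ (1 - s) • a + s • b :=
        add_le_add (DA_smul_le_smul (by linarith) haα) (DA_smul_le_smul hs0 hbα)
  have h2 : (1 - s) • a + s • b ≤ algebraMap ℝ A β := by
    calc (1 - s) • a + s • b ≤ (1 - s) • (algebraMap ℝ A β) + s • (algebraMap ℝ A β) :=
        add_le_add (DA_smul_le_smul (by linarith) haβ) (DA_smul_le_smul hs0 hbβ)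
      _ = algebraMap ℝ A β := hid β
  intro x hx
  exact ⟨(algebraMap_le_iff_le_spectrum (a := _) hsa).mp h1 x hx,
    (le_algebraMap_iff_spectrum_le (a := _) hsa).mp h2 x hx⟩

/-- Continuity of `s ↦ cfc f ((1-s) • a + s • b)` via polynomial approximation. -/
private lemma DA_cont {α β : ℝ} (f : ℝ → ℝ) (hf : ContinuousOn f (Icc α β)) (a b : A)
    (ha : IsSelfAdjoint a) (hb : IsSelfAdjoint b)
    (hspec : ∀ s ∈ Icc (0:ℝ) 1, spectrum ℝ ((1 - s) • a + s • b) ⊆ Icc α β) :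
    ContinuousOn (fun s => cfc f ((1 - s) • a + s • b)) (Icc (0:ℝ) 1) := by
  have hsa : ∀ s : ℝ, IsSelfAdjoint ((1 - s) • a + s • b) := DA_selfadjoint_combo ha hb
  have hP : ∀ n : ℕ, ∃ p : Polynomial ℝ, ∀ x ∈ Icc α β, |p.eval x - f x| < 1 / (n + 1) :=
    fun n => exists_polynomial_near_of_continuousOn α β f hf _ (by positivity)
  choose p hp using hP
  have hcontA : Continuous fun s : ℝ => (1 - s) • a + s • b := by
    exact ((continuous_const.sub continuous_id).smul continuous_const).add
      (continuous_id.smul continuous_const)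
  have hU : TendstoUniformlyOn (fun n s => Polynomial.aeval ((1 - s) • a + s • b) (p n))
      (fun s => cfc f ((1 - s) • a + s • b)) atTop (Icc (0:ℝ) 1) := by
    rw [Metric.tendstoUniformlyOn_iff]
    intro ε hε
    obtain ⟨N, hN⟩ := exists_nat_one_div_lt hε
    filter_upwards [Filter.eventually_ge_atTop N] with n hn s hs
    rw [dist_eq_norm]
    have hsaS : IsSelfAdjoint ((1 - s) • a + s • b) := hsa s
    have heq : cfc f ((1 - s) • a + s • b) - Polynomial.aeval ((1 - s) • a + s • b) (p n)
        = cfc (fun x => f x - (p n).eval x) ((1 - s) • a + s • b) := by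
      rw [cfc_sub _ _ _ (hf.mono (hspec s hs)) ((p n).continuous).continuousOn,
        cfc_polynomial (p n) _ hsaS]
    rw [heq]
    refine lt_of_le_of_lt (norm_cfc_le (c := 1/(n+1)) (by positivity) (fun x hx => ?_)) ?_
    · have := hp n x (hspec s hs hx)
      rw [Real.norm_eq_abs, abs_sub_comm]
      exact this.le
    · calc (1:ℝ) / (n + 1) ≤ 1 / (N + 1) := by
            apply one_div_le_one_div_of_le (by positivity)
            exact_mod_cast Nat.succ_le_succ hn
        _ < ε := hN
  exact hU.continuousOn (Filter.Frequently.of_forall fun n =>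
    ((p n).continuous_aeval.comp hcontA).continuousOn)

/-- Main analytic estimate. -/
private lemma DA_aux (g : ℝ → A) (hgc : ContinuousOn g (Icc (0:ℝ) 1))
    (hsa : ∀ s ∈ Icc (0:ℝ) 1, IsSelfAdjoint (g s))
    (hg0 : ∀ s ∈ Icc (0:ℝ) 1, 0 ≤ g s)
    {a b : ℝ} (ha : a ∈ Ioo (0:ℝ) 1) (hb : b ∈ Ioo (0:ℝ) 1) (hab : a < b)
    (hgle : ∀ y ∈ Icc a b, g y ≤ g a + g b) :
    ‖(2:ℝ)⁻¹ • (∫ s in (0:ℝ)..a, g s) + (2:ℝ)⁻¹ • (∫ s in (0:ℝ)..b, g s) -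
      (b - a)⁻¹ • ∫ t in a..b, (∫ s in (0:ℝ)..t, g s)‖ ≤ (b - a) / 8 * ‖g a + g b‖ := by
  obtain ⟨ha0, ha1⟩ := ha
  obtain ⟨hb0, hb1⟩ := hb
  have hba : (0:ℝ) < b - a := by linarith
  set m : ℝ := (a + b) / 2 with hm
  have ham : a < m := by rw [hm]; linarith
  have hmb : m < b := by rw [hm]; linarith
  have hab01 : Icc a b ⊆ Icc (0:ℝ) 1 := Icc_subset_Icc ha0.le hb1.le
  have gInt : ∀ u v : ℝ, u ∈ Icc (0:ℝ) 1 → v ∈ Icc (0:ℝ) 1 →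
      IntervalIntegrable g volume u v := fun u v hu hv =>
    (hgc.mono (uIcc_subset_Icc hu hv)).intervalIntegrable
  set G : ℝ → A := fun t => ∫ s in (0:ℝ)..t, g s with hGdef
  have hmem : ∀ t ∈ Icc a b, t ∈ Icc (0:ℝ) 1 := fun t ht => hab01 ht
  have hGd : ∀ t ∈ Icc a b, HasDerivAt G (g t) t := by
    intro t ht
    refine integral_hasDerivAt_right (gInt 0 t ⟨le_rfl, zero_le_one⟩ (hmem t ht)) ?_ ?_
    · exact ContinuousOn.stronglyMeasurableAtFilter isOpen_Ioo (hgc.mono Ioo_subset_Icc_self) t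
        ⟨lt_of_lt_of_le ha0 ht.1, lt_of_le_of_lt ht.2 hb1⟩
    · exact hgc.continuousAt (Icc_mem_nhds (lt_of_lt_of_le (by linarith) ht.1)
        (lt_of_le_of_lt ht.2 (by linarith)))
  have hGc : ContinuousOn G (Icc a b) := fun t ht =>
    ((hGd t ht).continuousAt).continuousWithinAt
  have hGint : IntervalIntegrable G volume a b := by
    apply ContinuousOn.intervalIntegrable
    rwa [uIcc_of_le hab.le]
  have hsmulInt : ∀ u v : ℝ, u ∈ Icc a b → v ∈ Icc a b →
      IntervalIntegrable (fun t => (t - m) • g t) volume u v := by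
    intro u v hu hv
    apply ContinuousOn.intervalIntegrable
    exact ((continuous_id.sub continuous_const).continuousOn).smul
      (hgc.mono ((uIcc_subset_Icc hu hv).trans hab01))
  have parts : ∫ t in a..b, ((t - m) • g t + G t) = (b - m) • G b - (a - m) • G a := by
    apply integral_eq_sub_of_hasDerivAt
    · intro t ht
      rw [uIcc_of_le hab.le] at ht
      have h1 := ((hasDerivAt_id t).sub_const m).smul (hGd t ht)
      convert h1 using 1
      · funext x; rfl
      · simp [add_comm]
    · exact (hsmulInt a b ⟨le_rfl, hab.le⟩ ⟨hab.le, le_rfl⟩).add hGint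
  set J : A := ∫ t in a..b, (t - m) • g t with hJdef
  have hGint_eq : ∫ t in a..b, G t = (b - m) • G b - (a - m) • G a - J := by
    rw [← parts, integral_add (hsmulInt a b ⟨le_rfl, hab.le⟩ ⟨hab.le, le_rfl⟩) hGint, hJdef]
    abel
  have key : (2:ℝ)⁻¹ • G a + (2:ℝ)⁻¹ • G b - (b - a)⁻¹ • ∫ t in a..b, G t
      = (b - a)⁻¹ • J := by
    rw [hGint_eq]
    have hba' : b - a ≠ 0 := ne_of_gt hba
    match_scalars
    · field_simp
      rw [hm]; ring
    · field_simp
      rw [hm]; ring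
    · field_simp
  -- reflection
  have hmm : a + b - b = a := by ring
  have hmm2 : a + b - m = m := by rw [hm]; ring
  have hreflc : ContinuousOn (fun x => ((a + b - x) - m) • g (a + b - x)) (uIcc m b) := by
    rw [uIcc_of_le hmb.le]
    refine ContinuousOn.smul (f := fun x => (a + b - x) - m) ?_ ?_
    · exact ((continuous_const.sub continuous_id).sub continuous_const).continuousOn
    · apply hgc.comp ((continuous_const.sub continuous_id).continuousOn)
      intro x hx
      exact hab01 ⟨by simp only [Pi.sub_apply, id_eq]; linarith [hx.2], by simp only [Pi.sub_apply, id_eq]; linarith [hx.1, ham.le]⟩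
  have hreflInt : IntervalIntegrable (fun x => ((a + b - x) - m) • g (a + b - x)) volume m b :=
    hreflc.intervalIntegrable
  have refl1 : (∫ t in a..m, (t - m) • g t)
      = ∫ x in m..b, ((a + b - x) - m) • g (a + b - x) := by
    have h := integral_comp_sub_left (a := m) (b := b) (fun t => (t - m) • g t) (a + b)
    rw [hmm, hmm2] at h
    exact h.symm
  have hJsplit : J = (∫ t in a..m, (t - m) • g t) + ∫ t in m..b, (t - m) • g t := by
    rw [hJdef, ← integral_add_adjacent_intervals
      (hsmulInt a m ⟨le_rfl, hab.le⟩ ⟨ham.le, hmb.le⟩)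
      (hsmulInt m b ⟨ham.le, hmb.le⟩ ⟨hab.le, le_rfl⟩)]
  have Jformula : J = ∫ x in m..b, (x - m) • (g x - g (a + b - x)) := by
    rw [hJsplit, refl1, ← integral_add hreflInt (hsmulInt m b ⟨ham.le, hmb.le⟩ ⟨hab.le, le_rfl⟩)]
    apply integral_congr
    intro x _
    have hx1 : a + b - x - m = -(x - m) := by rw [hm]; ring
    simp only
    rw [hx1, neg_smul, smul_sub]
    abel
  -- pointwise norm bound
  have hbd : ∀ x ∈ Icc m b, ‖g x - g (a + b - x)‖ ≤ ‖g a + g b‖ := by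
    intro x hx
    have hxab : x ∈ Icc a b := ⟨ham.le.trans hx.1, hx.2⟩
    have hx' : a + b - x ∈ Icc a b := ⟨by linarith [hx.2], by linarith [hx.1, ham.le]⟩
    have hX : IsSelfAdjoint (g x - g (a + b - x)) :=
      (hsa x (hab01 hxab)).sub (hsa _ (hab01 hx'))
    have hC : 0 ≤ g a + g b :=
      add_nonneg (hg0 a (hab01 ⟨le_rfl, hab.le⟩)) (hg0 b (hab01 ⟨hab.le, le_rfl⟩))
    refine DA_norm_le hX hC ?_ ?_
    · have h1 : g (a + b - x) ≤ g a + g b := hgle _ hx'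
      have h2 : 0 ≤ g x := hg0 x (hab01 hxab)
      calc -(g a + g b) ≤ -(g (a + b - x)) := neg_le_neg h1
        _ ≤ g x - g (a + b - x) := by
            have := sub_le_sub_right h2 (g (a + b - x))
            simpa using this
    · calc g x - g (a + b - x) ≤ g x := sub_le_self _ (hg0 _ (hab01 hx'))
        _ ≤ g a + g b := hgle x hxab
  -- norm estimate
  have hnormInt : IntervalIntegrable (fun x => ‖(x - m) • (g x - g (a + b - x))‖) volume m b := by
    apply ContinuousOn.intervalIntegrable
    apply ContinuousOn.norm
    rw [uIcc_of_le hmb.le]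
    apply ContinuousOn.smul ((continuous_id.sub continuous_const).continuousOn)
    apply ContinuousOn.sub
    · exact hgc.mono ((Icc_subset_Icc ham.le le_rfl).trans hab01)
    · apply hgc.comp ((continuous_const.sub continuous_id).continuousOn)
      intro x hx
      exact hab01 ⟨by simp only [Pi.sub_apply, id_eq]; linarith [hx.2], by simp only [Pi.sub_apply, id_eq]; linarith [hx.1, ham.le]⟩
  have hboundInt : IntervalIntegrable (fun x => (x - m) * ‖g a + g b‖) volume m b := by
    apply ContinuousOn.intervalIntegrable
    exact ((continuous_id.sub continuous_const).mul continuous_const).continuousOn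
  have hJnorm : ‖J‖ ≤ (b - m) ^ 2 / 2 * ‖g a + g b‖ := by
    rw [Jformula]
    calc ‖∫ x in m..b, (x - m) • (g x - g (a + b - x))‖
        ≤ ∫ x in m..b, ‖(x - m) • (g x - g (a + b - x))‖ :=
          norm_integral_le_integral_norm hmb.le
      _ ≤ ∫ x in m..b, (x - m) * ‖g a + g b‖ := by
          apply integral_mono_on hmb.le hnormInt hboundInt
          intro x hx
          rw [norm_smul, Real.norm_eq_abs, abs_of_nonneg (by linarith [hx.1])]
          exact mul_le_mul_of_nonneg_left (hbd x hx) (by linarith [hx.1])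
      _ = (∫ x in m..b, (x - m)) * ‖g a + g b‖ := by
          rw [← intervalIntegral.integral_mul_const]
      _ = (b - m) ^ 2 / 2 * ‖g a + g b‖ := by
          have : (∫ x in m..b, (x - m)) = (b - m) ^ 2 / 2 := by
            have h := integral_comp_sub_right (a := m) (b := b) (fun x => x) m
            rw [h, integral_id]
            ring
          rw [this]
  show ‖(2:ℝ)⁻¹ • G a + (2:ℝ)⁻¹ • G b - (b - a)⁻¹ • ∫ t in a..b, G t‖ ≤ _
  rw [key, norm_smul, Real.norm_eq_abs, abs_of_nonneg (inv_nonneg.2 hba.le)]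
  calc (b - a)⁻¹ * ‖J‖ ≤ (b - a)⁻¹ * ((b - m) ^ 2 / 2 * ‖g a + g b‖) :=
      mul_le_mul_of_nonneg_left hJnorm (inv_nonneg.2 hba.le)
    _ = (b - a) / 8 * ‖g a + g b‖ := by
      rw [hm]
      have hba' : b - a ≠ 0 := ne_of_gt hba
      field_simp
      ring

end Helpers

set_option maxHeartbeats 1000000 in
set_option synthInstance.maxHeartbeats 200000 in
/-- Operator norm estimates of Hermite–Hadamard type for a nonnegative
operator convex function `f` on an interval `I`. -/
theorem dragomir_agarwal_operator_convex_norm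
    {H : Type*} [NormedAddCommGroup H] [InnerProductSpace ℂ H] [CompleteSpace H]
    (I : Set ℝ) (hI : I.OrdConnected)
    (f : ℝ → ℝ) (hf : ContinuousOn f I) (hfnonneg : ∀ t ∈ I, 0 ≤ f t)
    (hconvex : ∀ A B : H →L[ℂ] H, IsSelfAdjoint A → IsSelfAdjoint B →
      spectrum ℝ A ⊆ I → spectrum ℝ B ⊆ I → ∀ lam ∈ Set.Icc (0:ℝ) 1,
        cfc f ((1 - lam) • A + lam • B) ≤ (1 - lam) • cfc f A + lam • cfc f B) :
    ∀ A B : H →L[ℂ] H, IsSelfAdjoint A → IsSelfAdjoint B →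
      spectrum ℝ A ⊆ I → spectrum ℝ B ⊆ I →
      ∀ a ∈ Set.Ioo (0:ℝ) 1, ∀ b ∈ Set.Ioo (0:ℝ) 1, a < b →
      ‖(2:ℝ)⁻¹ • (∫ s in (0:ℝ)..a, cfc f ((1 - s) • A + s • B)) +
        (2:ℝ)⁻¹ • (∫ s in (0:ℝ)..b, cfc f ((1 - s) • A + s • B)) -
        (b - a)⁻¹ • ∫ t in a..b, (∫ s in (0:ℝ)..t, cfc f ((1 - s) • A + s • B))‖ ≤
      (b - a) / 8 * ‖cfc f ((1 - a) • A + a • B) + cfc f ((1 - b) • A + b • B)‖ ∧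
      (b - a) / 8 * ‖cfc f ((1 - a) • A + a • B) + cfc f ((1 - b) • A + b • B)‖ ≤
      (b - a) / 8 * (‖cfc f ((1 - a) • A + a • B)‖ + ‖cfc f ((1 - b) • A + b • B)‖) := by
  intro A B hA hB hAI hBI a ha b hb hab
  have h8 : (0:ℝ) ≤ (b - a) / 8 := by linarith [hab]
  refine ⟨?_, mul_le_mul_of_nonneg_left (norm_add_le _ _) h8⟩
  obtain hsub | hnt := subsingleton_or_nontrivial (H →L[ℂ] H)
  · rw [Subsingleton.elim ((2:ℝ)⁻¹ • (∫ s in (0:ℝ)..a, cfc f ((1 - s) • A + s • B)) +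
        (2:ℝ)⁻¹ • (∫ s in (0:ℝ)..b, cfc f ((1 - s) • A + s • B)) -
        (b - a)⁻¹ • ∫ t in a..b, (∫ s in (0:ℝ)..t, cfc f ((1 - s) • A + s • B)))
        (0 : H →L[ℂ] H), norm_zero]
    exact mul_nonneg h8 (norm_nonneg _)
  · -- find a compact interval [α, β] ⊆ I containing both spectra
    have hKA : IsCompact (spectrum ℝ A) := spectrum.isCompact A
    have hKB : IsCompact (spectrum ℝ B) := spectrum.isCompact B
    have hneA : (spectrum ℝ A).Nonempty := CFC.spectrum_nonempty (R := ℝ) A hA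
    have hneB : (spectrum ℝ B).Nonempty := CFC.spectrum_nonempty (R := ℝ) B hB
    set α : ℝ := min (sInf (spectrum ℝ A)) (sInf (spectrum ℝ B)) with hα
    set β : ℝ := max (sSup (spectrum ℝ A)) (sSup (spectrum ℝ B)) with hβ
    have hαI : α ∈ I := by
      rcases min_cases (sInf (spectrum ℝ A)) (sInf (spectrum ℝ B)) with ⟨h, _⟩ | ⟨h, _⟩
      · rw [hα, h]; exact hAI (hKA.sInf_mem hneA)
      · rw [hα, h]; exact hBI (hKB.sInf_mem hneB)
    have hβI : β ∈ I := by
      rcases max_cases (sSup (spectrum ℝ A)) (sSup (spectrum ℝ B)) with ⟨h, _⟩ | ⟨h, _⟩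
      · rw [hβ, h]; exact hAI (hKA.sSup_mem hneA)
      · rw [hβ, h]; exact hBI (hKB.sSup_mem hneB)
    have hspA : spectrum ℝ A ⊆ Set.Icc α β := fun x hx =>
      ⟨(min_le_left _ _).trans (csInf_le hKA.bddBelow hx),
       (le_csSup hKA.bddAbove hx).trans (le_max_left _ _)⟩
    have hspB : spectrum ℝ B ⊆ Set.Icc α β := fun x hx =>
      ⟨(min_le_right _ _).trans (csInf_le hKB.bddBelow hx),
       (le_csSup hKB.bddAbove hx).trans (le_max_right _ _)⟩
    have hIccI : Set.Icc α β ⊆ I := fun x hx => hI.out hαI hβI hx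
    have hspec : ∀ s ∈ Set.Icc (0:ℝ) 1, spectrum ℝ ((1 - s) • A + s • B) ⊆ Set.Icc α β :=
      fun s hs => DA_spec_combo hA hB hspA hspB hs.1 hs.2
    have hspecI : ∀ s ∈ Set.Icc (0:ℝ) 1, spectrum ℝ ((1 - s) • A + s • B) ⊆ I :=
      fun s hs => (hspec s hs).trans hIccI
    have hgc : ContinuousOn (fun s => cfc f ((1 - s) • A + s • B)) (Set.Icc (0:ℝ) 1) :=
      DA_cont f (hf.mono hIccI) A B hA hB hspec
    have hsa : ∀ s ∈ Set.Icc (0:ℝ) 1, IsSelfAdjoint (cfc f ((1 - s) • A + s • B)) :=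
      fun s _ => cfc_predicate f ((1 - s) • A + s • B)
    have hg0 : ∀ s ∈ Set.Icc (0:ℝ) 1, 0 ≤ cfc f ((1 - s) • A + s • B) :=
      fun s hs => cfc_nonneg fun x hx => hfnonneg x (hspecI s hs hx)
    have hab01 : Set.Icc a b ⊆ Set.Icc (0:ℝ) 1 := Set.Icc_subset_Icc ha.1.le hb.2.le
    have hgle : ∀ y ∈ Set.Icc a b,
        cfc f ((1 - y) • A + y • B) ≤ cfc f ((1 - a) • A + a • B) + cfc f ((1 - b) • A + b • B) := by
      intro y hy
      have hba : (0:ℝ) < b - a := by linarith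
      set lam : ℝ := (y - a) / (b - a) with hlam
      have hlam0 : 0 ≤ lam := div_nonneg (by linarith [hy.1]) hba.le
      have hlam1 : lam ≤ 1 := (div_le_one hba).mpr (by linarith [hy.2])
      have hcomb : (1 - lam) • ((1 - a) • A + a • B) + lam • ((1 - b) • A + b • B)
          = (1 - y) • A + y • B := by
        have hba' : b - a ≠ 0 := ne_of_gt hba
        match_scalars
        · rw [hlam]; field_simp; ring
        · rw [hlam]; field_simp; ring
      have h1 := hconvex ((1 - a) • A + a • B) ((1 - b) • A + b • B)
        (DA_selfadjoint_combo hA hB a) (DA_selfadjoint_combo hA hB b)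
        (hspecI a ⟨ha.1.le, ha.2.le⟩) (hspecI b ⟨hb.1.le, hb.2.le⟩) lam ⟨hlam0, hlam1⟩
      rw [hcomb] at h1
      refine h1.trans ?_
      have hgA := hg0 a ⟨ha.1.le, ha.2.le⟩
      have hgB := hg0 b ⟨hb.1.le, hb.2.le⟩
      rw [← sub_nonneg]
      have hrw : cfc f ((1 - a) • A + a • B) + cfc f ((1 - b) • A + b • B)
          - ((1 - lam) • cfc f ((1 - a) • A + a • B) + lam • cfc f ((1 - b) • A + b • B))
          = lam • cfc f ((1 - a) • A + a • B) + (1 - lam) • cfc f ((1 - b) • A + b • B) := by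
        module
      rw [hrw]
      exact add_nonneg (DA_smul_nonneg hlam0 hgA) (DA_smul_nonneg (by linarith) hgB)
    exact DA_aux _ hgc hsa hg0 ha hb hab hgle
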